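/- Lower bound on ε-required work: under Crooks' Theorem, if P_rev(W) ≤ Q_max for all W, then W^ε ≥ ΔF + β^{-1}[−log(Q_max/β) + log(1 - ε)] for any ε ∈ [0,1). -/

import Mathlib

open MeasureTheory Real

lemma exp_mul_integrableOn_Iic (β a : ℝ) (hβ : 0 < β) :
    IntegrableOn (fun x => Real.exp (β * x)) (Set.Iic a) := by
  have A : MeasurableEmbedding fun x : ℝ => -x :=
    (Homeomorph.neg ℝ).isClosedEmbedding.measurableEmbedding
  have h := (integrableOn_Ici_iff_integrableOn_Ioi).mpr (exp_neg_integrableOn_Ioi (-a) hβ)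
  rw [IntegrableOn] at *
  have hmap : volume.restrict (Set.Iic a)
      = Measure.map (fun x : ℝ => -x) (volume.restrict (Set.Ici (-a))) := by
    rw [← Measure.map_neg_eq_self (volume : Measure ℝ), A.restrict_map]
    simp [Set.neg_preimage, Set.neg_Iic]
  rw [hmap, A.integrable_map_iff]
  simpa [Function.comp_def, mul_neg, neg_mul] using h

lemma integral_exp_mul_Iic' (β a : ℝ) (hβ : 0 < β) :
    ∫ x in Set.Iic a, Real.exp (β * x) = Real.exp (β * a) / β := by
  have hderiv : ∀ x ∈ Set.Iic a,
      HasDerivAt (fun x => Real.exp (β * x) / β) (Real.exp (β * x)) x := by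
    intro x _
    have := ((Real.hasDerivAt_exp (β * x)).comp x ((hasDerivAt_id x).const_mul β))
    have h2 := this.div_const β
    simpa [mul_comm, mul_div_assoc, mul_div_cancel_left₀ _ hβ.ne'] using h2
  have htend : Filter.Tendsto (fun x => Real.exp (β * x) / β) Filter.atBot (nhds 0) := by
    have h1 : Filter.Tendsto (fun x : ℝ => β * x) Filter.atBot Filter.atBot :=
      Filter.tendsto_id.const_mul_atBot hβ
    simpa using (Real.tendsto_exp_atBot.comp h1).div_const β
  simpa using integral_Iic_of_hasDerivAt_of_tendsto' hderiv (exp_mul_integrableOn_Iic β a hβ) htend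

theorem eps_required_work_lower_bound
    (β ΔF ε Qmax : ℝ) (hβ : 0 < β) (hε0 : 0 ≤ ε) (hε1 : ε < 1) (hQmax : 0 < Qmax)
    (Pfwd Prev : ℝ → ℝ)
    (hPf_nonneg : ∀ W, 0 ≤ Pfwd W) (hPr_nonneg : ∀ W, 0 ≤ Prev W)
    (hPf_norm : ∫ W, Pfwd W = 1) (hPr_norm : ∫ W, Prev W = 1)
    (hPr_bound : ∀ W, Prev W ≤ Qmax)
    (hCrooks : ∀ W, Pfwd W = Prev (-W) * Real.exp (β * (W - ΔF)))
    (Wε : ℝ)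
    (hWε : ∫ W in Set.Iic Wε, Pfwd W = 1 - ε)
    (hint : IntegrableOn (fun W => Prev W * Real.exp (-β * W)) (Set.Ici (-Wε)))
    (hint' : IntegrableOn Pfwd (Set.Iic Wε)) :
    ΔF + (1 / β) * (-Real.log (Qmax / β) + Real.log (1 - ε)) ≤ Wε := by
  have hb : ∀ W, Pfwd W ≤ Qmax * Real.exp (-(β * ΔF)) * Real.exp (β * W) := by
    intro W
    rw [hCrooks W]
    have : Real.exp (β * (W - ΔF)) = Real.exp (-(β * ΔF)) * Real.exp (β * W) := by
      rw [← Real.exp_add]; ring_nf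
    rw [this, ← mul_assoc]
    exact mul_le_mul_of_nonneg_right (mul_le_mul_of_nonneg_right (hPr_bound _)
      (Real.exp_pos _).le) (Real.exp_pos _).le
  have hintg : IntegrableOn (fun W => Qmax * Real.exp (-(β * ΔF)) * Real.exp (β * W))
      (Set.Iic Wε) := (exp_mul_integrableOn_Iic β Wε hβ).const_mul _
  have hle : (1 : ℝ) - ε ≤ Qmax * Real.exp (-(β * ΔF)) * (Real.exp (β * Wε) / β) := by
    rw [← hWε]
    calc ∫ W in Set.Iic Wε, Pfwd W
        ≤ ∫ W in Set.Iic Wε, Qmax * Real.exp (-(β * ΔF)) * Real.exp (β * W) :=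
          setIntegral_mono_on hint' hintg measurableSet_Iic (fun W _ => hb W)
      _ = Qmax * Real.exp (-(β * ΔF)) * (Real.exp (β * Wε) / β) := by
          rw [integral_const_mul, integral_exp_mul_Iic' β Wε hβ]
  have hpos : (0 : ℝ) < 1 - ε := by linarith
  have hxp : Real.exp (β * Wε - β * ΔF) = Real.exp (-(β * ΔF)) * Real.exp (β * Wε) := by
    rw [← Real.exp_add]; ring_nf
  have hrhs : Qmax * Real.exp (-(β * ΔF)) * (Real.exp (β * Wε) / β)
      = (Qmax / β) * Real.exp (β * Wε - β * ΔF) := by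
    rw [hxp]; ring
  rw [hrhs] at hle
  have hlog := Real.log_le_log hpos hle
  rw [Real.log_mul (by positivity) (Real.exp_pos _).ne', Real.log_exp] at hlog
  have h1 : (1/β) * (-Real.log (Qmax/β) + Real.log (1-ε)) ≤ (1/β) * (β*Wε - β*ΔF) :=
    mul_le_mul_of_nonneg_left (by linarith) (by positivity)
  have h2 : (1/β) * (β*Wε - β*ΔF) = Wε - ΔF := by field_simp
  linarith
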